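/- Let θ₁ be a global maximizer of R₁, θ₂ a global maximizer of R₂, and θ̂_μ a global maximizer of R_μ. Suppose R_adv is L_adv-smooth and m_adv-strongly concave and R_real is L_real-smooth and m_real-strongly concave, with m_adv, m_real > 0. Set L₁ = β·L_adv + (1−β)·L_real, L₂ = (1−β)·L_adv + β·L_real and m_μ = μ·m_adv + (1−μ)·m_real. Then the suboptimality gap of the best interpolated model satisfies R_μ(θ̂_μ) − sup_{λ ∈ [0,1]} R_μ(θ(λ)) ≤ ( max(c₁²·L₁², c₂²·L₂²) / (2·m_μ) ) · ‖θ₂ − θ₁‖². -/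

import Mathlib

open scoped RealInnerProductSpace

lemma combo_hasGradientAt {F : Type*} [NormedAddCommGroup F] [InnerProductSpace ℝ F]
    [CompleteSpace F] (a b : ℝ) (g h : F → ℝ) (hg : Differentiable ℝ g)
    (hh : Differentiable ℝ h) (x : F) :
    HasGradientAt (fun θ => a * g θ + b * h θ)
      (a • gradient g x + b • gradient h x) x := by
  rw [hasGradientAt_iff_hasFDerivAt]
  have Hg := ((hg x).hasGradientAt.hasFDerivAt).const_mul a
  have Hh := ((hh x).hasGradientAt.hasFDerivAt).const_mul b
  have := Hg.add Hh
  exact this.congr_fderiv (by simp [map_add, map_smul])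

set_option maxHeartbeats 1000000

/-- Suboptimality of weight interpolation (Theorem 1 / general non-quadratic case).
If `θ₁` globally maximizes `R₁ = β·R_adv + (1−β)·R_real`, `θ₂` globally maximizes
`R₂ = (1−β)·R_adv + β·R_real`, and `θ̂_μ` globally maximizes `R_μ = μ·R_adv + (1−μ)·R_real`,
with `R_adv` being `L_adv`-smooth and `m_adv`-strongly concave and `R_real` being
`L_real`-smooth and `m_real`-strongly concave, then
`R_μ(θ̂_μ) − sup_{λ∈[0,1]} R_μ(θ(λ)) ≤ (max(c₁²L₁², c₂²L₂²) / (2m_μ)) · ‖θ₂ − θ₁‖²`. -/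
theorem suboptimality_of_weight_interpolation
    {F : Type*} [NormedAddCommGroup F] [InnerProductSpace ℝ F] [CompleteSpace F]
    (R_adv R_real : F → ℝ)
    (hadv : Differentiable ℝ R_adv) (hreal : Differentiable ℝ R_real)
    (β μ : ℝ) (hβ : β ∈ Set.Ioc (1 / 2 : ℝ) 1) (hμ : μ ∈ Set.Icc (0 : ℝ) 1)
    (L_adv L_real m_adv m_real : ℝ) (hm_adv : 0 < m_adv) (hm_real : 0 < m_real)
    (hL_adv : ∀ a b : F, ‖gradient R_adv a - gradient R_adv b‖ ≤ L_adv * ‖a - b‖)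
    (hL_real : ∀ a b : F, ‖gradient R_real a - gradient R_real b‖ ≤ L_real * ‖a - b‖)
    (hSC_adv : ∀ a b : F,
      R_adv a ≤ R_adv b + ⟪gradient R_adv b, a - b⟫ - (m_adv / 2) * ‖a - b‖ ^ 2)
    (hSC_real : ∀ a b : F,
      R_real a ≤ R_real b + ⟪gradient R_real b, a - b⟫ - (m_real / 2) * ‖a - b‖ ^ 2)
    (R₁ R₂ Rμ : F → ℝ)
    (hR₁ : R₁ = fun θ => β * R_adv θ + (1 - β) * R_real θ)
    (hR₂ : R₂ = fun θ => (1 - β) * R_adv θ + β * R_real θ)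
    (hRμ : Rμ = fun θ => μ * R_adv θ + (1 - μ) * R_real θ)
    (θ₁ θ₂ θhat : F)
    (hθ₁ : ∀ θ : F, R₁ θ ≤ R₁ θ₁)
    (hθ₂ : ∀ θ : F, R₂ θ ≤ R₂ θ₂)
    (hθhat : ∀ θ : F, Rμ θ ≤ Rμ θhat)
    (c₁ c₂ L₁ L₂ mμ : ℝ)
    (hc₁ : c₁ = (μ + β - 1) / (2 * β - 1)) (hc₂ : c₂ = (β - μ) / (2 * β - 1))
    (hL₁ : L₁ = β * L_adv + (1 - β) * L_real) (hL₂ : L₂ = (1 - β) * L_adv + β * L_real)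
    (hmμ : mμ = μ * m_adv + (1 - μ) * m_real) :
    Rμ θhat - sSup ((fun l : ℝ => Rμ ((1 - l) • θ₂ + l • θ₁)) '' Set.Icc (0 : ℝ) 1) ≤
      (max (c₁ ^ 2 * L₁ ^ 2) (c₂ ^ 2 * L₂ ^ 2) / (2 * mμ)) * ‖θ₂ - θ₁‖ ^ 2 := by
  obtain ⟨hβ1, hβ2⟩ := hβ
  obtain ⟨hμ0, hμ1⟩ := hμ
  have hmμpos : 0 < mμ := by
    rw [hmμ]; rcases le_total m_adv m_real with h | h <;> nlinarith
  -- bddAbove and the trivial sSup lower bound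
  have hbdd : BddAbove ((fun l : ℝ => Rμ ((1 - l) • θ₂ + l • θ₁)) '' Set.Icc (0 : ℝ) 1) := by
    refine ⟨Rμ θhat, ?_⟩
    rintro x ⟨l, -, rfl⟩
    exact hθhat _
  rcases subsingleton_or_nontrivial F with hF | hF
  · have h21 : θ₂ - θ₁ = (0 : F) := Subsingleton.elim _ _
    have hconst : ∀ l : ℝ, (1 - l) • θ₂ + l • θ₁ = θhat := fun l => Subsingleton.elim _ _
    have himg : (fun l : ℝ => Rμ ((1 - l) • θ₂ + l • θ₁)) '' Set.Icc (0 : ℝ) 1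
        = {Rμ θhat} := by
      simp only [hconst]
      exact Set.Nonempty.image_const (by norm_num) _
    rw [himg, csSup_singleton, h21]
    simp
  -- nontriviality gives nonnegative Lipschitz constants
  obtain ⟨v, w, hvw⟩ := exists_pair_ne F
  have hvw' : 0 < ‖v - w‖ := by simpa [sub_eq_zero] using hvw
  have hLadv0 : 0 ≤ L_adv := by
    nlinarith [hL_adv v w, norm_nonneg (gradient R_adv v - gradient R_adv w)]
  have hLreal0 : 0 ≤ L_real := by
    nlinarith [hL_real v w, norm_nonneg (gradient R_real v - gradient R_real w)]
  have hL₁0 : 0 ≤ L₁ := by rw [hL₁]; nlinarith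
  have hL₂0 : 0 ≤ L₂ := by rw [hL₂]; nlinarith
  -- coefficients
  have h2β : 0 < 2 * β - 1 := by linarith
  have hc12 : c₁ + c₂ = 1 := by rw [hc₁, hc₂, ← add_div, div_eq_one_iff_eq h2β.ne']; ring
  have hμs : μ = c₁ * β + c₂ * (1 - β) := by rw [hc₁, hc₂, div_mul_eq_mul_div, div_mul_eq_mul_div, ← add_div, eq_div_iff h2β.ne']; ring
  have hμs' : 1 - μ = c₁ * (1 - β) + c₂ * β := by rw [hc₁, hc₂, div_mul_eq_mul_div, div_mul_eq_mul_div, ← add_div, eq_div_iff h2β.ne']; ring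
  -- gradients and first order conditions
  set A := gradient R_adv with hA
  set B := gradient R_real with hB
  have hG1 : ∀ x : F, HasGradientAt R₁ (β • A x + (1 - β) • B x) x := by
    intro x; rw [hR₁]; exact combo_hasGradientAt _ _ _ _ hadv hreal x
  have hG2 : ∀ x : F, HasGradientAt R₂ ((1 - β) • A x + β • B x) x := by
    intro x; rw [hR₂]; exact combo_hasGradientAt _ _ _ _ hadv hreal x
  have E1 : β • A θ₁ + (1 - β) • B θ₁ = 0 := by
    have hmax : IsLocalMax R₁ θ₁ := Filter.Eventually.of_forall hθ₁
    have h0 := hmax.hasFDerivAt_eq_zero (hG1 θ₁).hasFDerivAt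
    simpa using congrArg (InnerProductSpace.toDual ℝ F).symm h0
  have E2 : (1 - β) • A θ₂ + β • B θ₂ = 0 := by
    have hmax : IsLocalMax R₂ θ₂ := Filter.Eventually.of_forall hθ₂
    have h0 := hmax.hasFDerivAt_eq_zero (hG2 θ₂).hasFDerivAt
    simpa using congrArg (InnerProductSpace.toDual ℝ F).symm h0
  -- Lipschitz bounds for the expert gradients
  have hLip1 : ∀ x y : F, ‖(β • A x + (1 - β) • B x) - (β • A y + (1 - β) • B y)‖
      ≤ L₁ * ‖x - y‖ := by
    intro x y
    have hrw : (β • A x + (1 - β) • B x) - (β • A y + (1 - β) • B y)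
        = β • (A x - A y) + (1 - β) • (B x - B y) := by module
    rw [hrw]
    calc ‖β • (A x - A y) + (1 - β) • (B x - B y)‖
        ≤ ‖β • (A x - A y)‖ + ‖(1 - β) • (B x - B y)‖ := norm_add_le _ _
      _ = β * ‖A x - A y‖ + (1 - β) * ‖B x - B y‖ := by
          rw [norm_smul, norm_smul, Real.norm_eq_abs, Real.norm_eq_abs,
            abs_of_nonneg (by linarith), abs_of_nonneg (by linarith)]
      _ ≤ β * (L_adv * ‖x - y‖) + (1 - β) * (L_real * ‖x - y‖) :=
          add_le_add (mul_le_mul_of_nonneg_left (hL_adv x y) (by linarith))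
            (mul_le_mul_of_nonneg_left (hL_real x y) (by linarith))
      _ = L₁ * ‖x - y‖ := by rw [hL₁]; ring
  have hLip2 : ∀ x y : F, ‖((1 - β) • A x + β • B x) - ((1 - β) • A y + β • B y)‖
      ≤ L₂ * ‖x - y‖ := by
    intro x y
    have hrw : ((1 - β) • A x + β • B x) - ((1 - β) • A y + β • B y)
        = (1 - β) • (A x - A y) + β • (B x - B y) := by module
    rw [hrw]
    calc ‖(1 - β) • (A x - A y) + β • (B x - B y)‖
        ≤ ‖(1 - β) • (A x - A y)‖ + ‖β • (B x - B y)‖ := norm_add_le _ _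
      _ = (1 - β) * ‖A x - A y‖ + β * ‖B x - B y‖ := by
          rw [norm_smul, norm_smul, Real.norm_eq_abs, Real.norm_eq_abs,
            abs_of_nonneg (by linarith), abs_of_nonneg (by linarith)]
      _ ≤ (1 - β) * (L_adv * ‖x - y‖) + β * (L_real * ‖x - y‖) :=
          add_le_add (mul_le_mul_of_nonneg_left (hL_adv x y) (by linarith))
            (mul_le_mul_of_nonneg_left (hL_real x y) (by linarith))
      _ = L₂ * ‖x - y‖ := by rw [hL₂]; ring
  -- the chosen interpolation point
  set lam := min 1 (max 0 c₁) with hlam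
  set θl := (1 - lam) • θ₂ + lam • θ₁ with hθl
  set G := μ • A θl + (1 - μ) • B θl with hG
  have hlam0 : 0 ≤ lam := le_min zero_le_one (le_max_left 0 c₁)
  have hlam1 : lam ≤ 1 := min_le_left _ _
  have hGdecomp : G = c₁ • ((β • A θl + (1 - β) • B θl) - (β • A θ₁ + (1 - β) • B θ₁))
      + c₂ • (((1 - β) • A θl + β • B θl) - ((1 - β) • A θ₂ + β • B θ₂)) := by
    rw [E1, E2, sub_zero, sub_zero, hG, hμs', hμs]
    module
  set M := max (c₁ ^ 2 * L₁ ^ 2) (c₂ ^ 2 * L₂ ^ 2) with hM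
  -- squared norm bound on G
  have hGsq : ‖G‖ ^ 2 ≤ M * ‖θ₂ - θ₁‖ ^ 2 := by
    rcases le_or_gt c₁ 0 with hcase | hcase
    · -- lam = 0, θl = θ₂
      have hlameq : lam = 0 := by
        rw [hlam, max_eq_left hcase, min_eq_right zero_le_one]
      have hθleq : θl = θ₂ := by rw [hθl, hlameq]; simp
      have hGn : ‖G‖ ≤ |c₁| * (L₁ * ‖θ₂ - θ₁‖) := by
        rw [hGdecomp, hθleq, sub_self, smul_zero, add_zero, norm_smul,
          Real.norm_eq_abs]
        exact mul_le_mul_of_nonneg_left (hLip1 θ₂ θ₁) (abs_nonneg _)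
      have h1 : ‖G‖ ^ 2 ≤ (|c₁| * (L₁ * ‖θ₂ - θ₁‖)) ^ 2 :=
        pow_le_pow_left₀ (norm_nonneg _) hGn 2
      have h2 : (|c₁| * (L₁ * ‖θ₂ - θ₁‖)) ^ 2 = c₁ ^ 2 * L₁ ^ 2 * ‖θ₂ - θ₁‖ ^ 2 := by
        rw [mul_pow, mul_pow, sq_abs]; ring
      calc ‖G‖ ^ 2 ≤ c₁ ^ 2 * L₁ ^ 2 * ‖θ₂ - θ₁‖ ^ 2 := by rw [← h2]; exact h1
        _ ≤ M * ‖θ₂ - θ₁‖ ^ 2 := by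
            gcongr; exact le_max_left _ _
    rcases le_or_gt c₁ 1 with hcase1 | hcase1
    · -- middle case : lam = c₁
      have hc₂0 : 0 ≤ c₂ := by linarith
      have hlameq : lam = c₁ := by
        rw [hlam, max_eq_right hcase.le, min_eq_right hcase1]
      have hd1 : θl - θ₁ = c₂ • (θ₂ - θ₁) := by
        rw [hθl, hlameq, show c₂ = 1 - c₁ by linarith]; module
      have hd2 : θl - θ₂ = c₁ • (θ₁ - θ₂) := by
        rw [hθl, hlameq]; module
      set K := max (c₁ * L₁) (c₂ * L₂) with hK
      have hn1 : ‖(β • A θl + (1 - β) • B θl) - (β • A θ₁ + (1 - β) • B θ₁)‖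
          ≤ L₁ * (c₂ * ‖θ₂ - θ₁‖) := by
        have h := hLip1 θl θ₁
        rwa [hd1, norm_smul, Real.norm_eq_abs, abs_of_nonneg hc₂0] at h
      have hn2 : ‖((1 - β) • A θl + β • B θl) - ((1 - β) • A θ₂ + β • B θ₂)‖
          ≤ L₂ * (c₁ * ‖θ₂ - θ₁‖) := by
        have h := hLip2 θl θ₂
        rwa [hd2, norm_smul, Real.norm_eq_abs, abs_of_nonneg hcase.le,
          norm_sub_rev θ₁ θ₂] at h
      have hGn : ‖G‖ ≤ K * ‖θ₂ - θ₁‖ := by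
        have h0 : ‖G‖ ≤ c₁ * (L₁ * (c₂ * ‖θ₂ - θ₁‖)) + c₂ * (L₂ * (c₁ * ‖θ₂ - θ₁‖)) := by
          rw [hGdecomp]
          refine (norm_add_le _ _).trans ?_
          rw [norm_smul, norm_smul, Real.norm_eq_abs, Real.norm_eq_abs,
            abs_of_nonneg hcase.le, abs_of_nonneg hc₂0]
          exact add_le_add (mul_le_mul_of_nonneg_left hn1 hcase.le)
            (mul_le_mul_of_nonneg_left hn2 hc₂0)
        have hKa : c₁ * L₁ ≤ K := le_max_left _ _
        have hKb : c₂ * L₂ ≤ K := le_max_right _ _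
        have hsum : K * (c₂ * ‖θ₂ - θ₁‖) + K * (c₁ * ‖θ₂ - θ₁‖) = K * ‖θ₂ - θ₁‖ := by
          rw [show c₂ = 1 - c₁ by linarith]; ring
        nlinarith [mul_le_mul_of_nonneg_right hKa (mul_nonneg hc₂0 (norm_nonneg (θ₂ - θ₁))),
          mul_le_mul_of_nonneg_right hKb (mul_nonneg hcase.le (norm_nonneg (θ₂ - θ₁)))]
      have hK0 : 0 ≤ K := le_trans (mul_nonneg hcase.le hL₁0) (le_max_left (c₁ * L₁) (c₂ * L₂))
      have h1 : ‖G‖ ^ 2 ≤ (K * ‖θ₂ - θ₁‖) ^ 2 := pow_le_pow_left₀ (norm_nonneg _) hGn 2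
      have hK2 : K ^ 2 ≤ M := by
        rcases max_cases (c₁ * L₁) (c₂ * L₂) with ⟨he, -⟩ | ⟨he, -⟩ <;>
          rw [hK, he, mul_pow]
        · exact le_max_left _ _
        · exact le_max_right _ _
      calc ‖G‖ ^ 2 ≤ K ^ 2 * ‖θ₂ - θ₁‖ ^ 2 := by rw [← mul_pow]; exact h1
        _ ≤ M * ‖θ₂ - θ₁‖ ^ 2 := by gcongr
    · -- lam = 1, θl = θ₁
      have hlameq : lam = 1 := by
        rw [hlam, max_eq_right (by linarith : (0:ℝ) ≤ c₁), min_eq_left hcase1.le]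
      have hθleq : θl = θ₁ := by rw [hθl, hlameq]; simp
      have hGn : ‖G‖ ≤ |c₂| * (L₂ * ‖θ₂ - θ₁‖) := by
        rw [hGdecomp, hθleq, sub_self, smul_zero, zero_add, norm_smul,
          Real.norm_eq_abs]
        have h := hLip2 θ₁ θ₂
        rw [norm_sub_rev θ₁ θ₂] at h
        exact mul_le_mul_of_nonneg_left h (abs_nonneg _)
      have h1 : ‖G‖ ^ 2 ≤ (|c₂| * (L₂ * ‖θ₂ - θ₁‖)) ^ 2 :=
        pow_le_pow_left₀ (norm_nonneg _) hGn 2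
      have h2 : (|c₂| * (L₂ * ‖θ₂ - θ₁‖)) ^ 2 = c₂ ^ 2 * L₂ ^ 2 * ‖θ₂ - θ₁‖ ^ 2 := by
        rw [mul_pow, mul_pow, sq_abs]; ring
      calc ‖G‖ ^ 2 ≤ c₂ ^ 2 * L₂ ^ 2 * ‖θ₂ - θ₁‖ ^ 2 := by rw [← h2]; exact h1
        _ ≤ M * ‖θ₂ - θ₁‖ ^ 2 := by gcongr; exact le_max_right _ _
  -- strong concavity of Rμ at θl
  have hSCμ : Rμ θhat ≤ Rμ θl + ⟪G, θhat - θl⟫ - (mμ / 2) * ‖θhat - θl‖ ^ 2 := by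
    have h1 := hSC_adv θhat θl
    have h2 := hSC_real θhat θl
    have hinner : ⟪G, θhat - θl⟫
        = μ * ⟪A θl, θhat - θl⟫ + (1 - μ) * ⟪B θl, θhat - θl⟫ := by
      rw [hG, inner_add_left, real_inner_smul_left, real_inner_smul_left]
    rw [hRμ, hinner, hmμ]
    simp only
    nlinarith [mul_le_mul_of_nonneg_left h1 hμ0,
      mul_le_mul_of_nonneg_left h2 (by linarith : (0:ℝ) ≤ 1 - μ)]
  -- AM-GM step
  have hkey : Rμ θhat ≤ Rμ θl + ‖G‖ ^ 2 / (2 * mμ) := by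
    have hCS : ⟪G, θhat - θl⟫ ≤ ‖G‖ * ‖θhat - θl‖ := real_inner_le_norm _ _
    have hAMGM : ‖G‖ * ‖θhat - θl‖ - (mμ / 2) * ‖θhat - θl‖ ^ 2 ≤ ‖G‖ ^ 2 / (2 * mμ) := by
      rw [le_div_iff₀ (by positivity)]
      nlinarith [sq_nonneg (‖G‖ - mμ * ‖θhat - θl‖)]
    linarith
  -- sSup bound
  have hmem : Rμ θl ∈ (fun l : ℝ => Rμ ((1 - l) • θ₂ + l • θ₁)) '' Set.Icc (0 : ℝ) 1 :=
    ⟨lam, ⟨hlam0, hlam1⟩, rfl⟩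
  have hsup : Rμ θl ≤ sSup ((fun l : ℝ => Rμ ((1 - l) • θ₂ + l • θ₁)) '' Set.Icc (0 : ℝ) 1) :=
    le_csSup hbdd hmem
  have hfin : ‖G‖ ^ 2 / (2 * mμ) ≤ M / (2 * mμ) * ‖θ₂ - θ₁‖ ^ 2 := by
    rw [div_mul_eq_mul_div]
    exact (div_le_div_iff_of_pos_right (by positivity)).mpr hGsq
  linarith
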